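/- Let g : (0,1) → ℝ be C¹ with g(r) < 0 and g'(r) ≥ 0 for all r ∈ (0,1). Let u : (0,1) → ℝ be C², bounded from below, satisfying max(u''(r)+(k-1)u'(r)/r, k·u'(r)/r) = g(r) for all r ∈ (0,1), with 1 ≤ k ≤ N. Then u''(r) - u'(r)/r ≥ 0 for all r ∈ (0,1). -/

import Mathlib

open Set

theorem stmt3 (N k : ℕ) (hk1 : 1 ≤ k) (hkN : k ≤ N)
    (g g' : ℝ → ℝ)
    (hg' : ∀ r ∈ Ioo (0:ℝ) 1, HasDerivAt g (g' r) r)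
    (hg'c : ContinuousOn g' (Ioo (0:ℝ) 1))
    (hgneg : ∀ r ∈ Ioo (0:ℝ) 1, g r < 0)
    (hg'pos : ∀ r ∈ Ioo (0:ℝ) 1, 0 ≤ g' r)
    (u u' u'' : ℝ → ℝ)
    (hu' : ∀ r ∈ Ioo (0:ℝ) 1, HasDerivAt u (u' r) r)
    (hu'' : ∀ r ∈ Ioo (0:ℝ) 1, HasDerivAt u' (u'' r) r)
    (hu''c : ContinuousOn u'' (Ioo (0:ℝ) 1))
    (hbdd : BddBelow (u '' Ioo (0:ℝ) 1))
    (heq : ∀ r ∈ Ioo (0:ℝ) 1,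
      max (u'' r + ((k:ℝ) - 1) * u' r / r) ((k:ℝ) * u' r / r) = g r) :
    ∀ r ∈ Ioo (0:ℝ) 1, 0 ≤ u'' r - u' r / r := by
  intro r₀ hr₀
  by_contra hlt
  push_neg at hlt
  have hk0 : (k:ℝ) ≠ 0 := by
    have : (1:ℝ) ≤ k := by exact_mod_cast hk1
    linarith
  have hIoo : Ioo (0:ℝ) 1 ∈ nhds r₀ := isOpen_Ioo.mem_nhds hr₀
  have hca : ContinuousAt (fun r => u'' r - u' r / r) r₀ := by
    have h1 : ContinuousAt u'' r₀ := hu''c.continuousAt hIoo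
    have h2 : ContinuousAt u' r₀ := (hu'' r₀ hr₀).continuousAt
    exact h1.sub (h2.div continuousAt_id (ne_of_gt hr₀.1))
  have hev : ∀ᶠ r in nhds r₀, u'' r - u' r / r < 0 :=
    Filter.Tendsto.eventually_lt_const hlt hca
  have hevm : ∀ᶠ r in nhds r₀, r ∈ Ioo (0:ℝ) 1 :=
    Filter.eventually_of_mem hIoo fun x hx => hx
  have hevu' : ∀ᶠ r in nhds r₀, u' r = r * g r / k := by
    filter_upwards [hev, hevm] with r hr hrm
    have hr0 : r ≠ 0 := ne_of_gt hrm.1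
    have hab : u'' r + ((k:ℝ) - 1) * u' r / r < (k:ℝ) * u' r / r := by
      have : u'' r + ((k:ℝ) - 1) * u' r / r - (k:ℝ) * u' r / r
          = u'' r - u' r / r := by field_simp; ring
      linarith [this]
    have := heq r hrm
    rw [max_eq_right hab.le] at this
    field_simp at this ⊢
    linarith [this]
  have hd : HasDerivAt (fun r => r * g r / k) ((g r₀ + r₀ * g' r₀) / k) r₀ := by
    have := ((hasDerivAt_id r₀).mul (hg' r₀ hr₀)).div_const (k:ℝ)
    refine this.congr_deriv ?_
    show (1 * g r₀ + r₀ * g' r₀) / k = (g r₀ + r₀ * g' r₀) / k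
    ring
  have hu''eq : u'' r₀ = (g r₀ + r₀ * g' r₀) / k := by
    have hd' : HasDerivAt u' ((g r₀ + r₀ * g' r₀) / k) r₀ :=
      hd.congr_of_eventuallyEq hevu'
    exact (hu'' r₀ hr₀).unique hd'
  have hu'eq : u' r₀ = r₀ * g r₀ / k := hevu'.self_of_nhds
  have h0 : u'' r₀ - u' r₀ / r₀ = r₀ * g' r₀ / k := by
    rw [hu''eq, hu'eq]
    field_simp [ne_of_gt hr₀.1]
    ring
  have : 0 ≤ r₀ * g' r₀ / k := by
    have := hg'pos r₀ hr₀
    have hk : (0:ℝ) < k := lt_of_le_of_ne (Nat.cast_nonneg k) (Ne.symm hk0)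
    exact div_nonneg (mul_nonneg hr₀.1.le this) hk.le
  linarith [h0 ▸ this]
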